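/- For an idempotent matrix F over a commutative ring, the polynomial P_F(T) = det(Id + (T-1)F) satisfies P_F(T·T') = P_F(T)·P_F(T') (as polynomials in two variables) and P_F(1) = 1. -/

import Mathlib

open Polynomial

/-- `P_F(t) = det(Id + (t-1)·F)`, evaluated in any commutative `A`-algebra. -/
noncomputable def PF {A : Type*} [CommRing A] {m : ℕ} (F : Matrix (Fin m) (Fin m) A)
    (R : Type*) [CommRing R] [Algebra A R] (t : R) : R :=
  ((1 : Matrix (Fin m) (Fin m) R) + (t - 1) • F.map (algebraMap A R)).det

theorem PF_key {A : Type*} [CommRing A] {m : ℕ}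
    (F : Matrix (Fin m) (Fin m) A) (hF : F * F = F)
    (R : Type*) [CommRing R] [Algebra A R] (t s : R) :
    PF F R (t * s) = PF F R t * PF F R s := by
  set M := F.map (algebraMap A R) with hM
  have hMM : M * M = M := by
    rw [hM, ← Matrix.map_mul, hF]
  unfold PF
  rw [← Matrix.det_mul]
  congr 1
  have expand : (1 + (t - 1) • M) * (1 + (s - 1) • M)
      = 1 + ((t - 1) + (s - 1) + (t - 1) * (s - 1)) • M := by
    simp only [add_mul, mul_add, one_mul, mul_one, Matrix.smul_mul, Matrix.mul_smul,
      hMM, smul_smul, add_smul]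
    module
  rw [expand]
  congr 1
  ring_nf
  rfl

/-- For an idempotent matrix `F`, we have `P_F(T·T') = P_F(T)·P_F(T')` as a polynomial
identity in two variables, and `P_F(1) = 1`. -/
theorem PF_mul_and_one {A : Type*} [CommRing A] {m : ℕ}
    (F : Matrix (Fin m) (Fin m) A) (hF : F * F = F) :
    PF F (Polynomial (Polynomial A)) (C X * X) =
      PF F (Polynomial (Polynomial A)) (C X) * PF F (Polynomial (Polynomial A)) X ∧
    PF F A 1 = 1 := by
  refine ⟨PF_key F hF _ (C X) X, ?_⟩
  simp [PF]
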